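/- Let X be a Hausdorff topological space and let σ : [0,1] → X be a continuous map with σ(0) ≠ σ(1). Then there exists a closed set F ⊆ [0,1] such that: (i) σ(0) and σ(1) lie in σ(F); (ii) whenever a < b are points of F with (a,b) ∩ F = ∅ (equivalently, (a,b) is a connected component of [0,1]∖F), one has σ(a) = σ(b); (iii) no proper closed subset of F satisfies both (i) and (ii); and (iv) σ(F) is an arc in X, i.e. the image of a topological embedding of [0,1] into X. -/

import Mathlib

open Set Filter MeasureTheory

noncomputable def arcDigits (t : ℝ) (n : ℕ) : Bool := decide (⌊t * 2^(n+1)⌋ % 2 = 1)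

lemma arc_floor_two_mul (y : ℝ) : ⌊2*y⌋ = 2*⌊y⌋ ∨ ⌊2*y⌋ = 2*⌊y⌋ + 1 := by
  have h1 : (2:ℤ)*⌊y⌋ ≤ ⌊2*y⌋ := by
    rw [Int.le_floor]; push_cast; nlinarith [Int.floor_le y]
  have h2 : ⌊2*y⌋ < 2*⌊y⌋ + 2 := by
    rw [Int.floor_lt]; push_cast; nlinarith [Int.lt_floor_add_one y]
  omega

lemma arc_digits_inj {s t : ℝ} (hs : s ∈ Ico (0:ℝ) 1) (ht : t ∈ Ico (0:ℝ) 1)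
    (h : arcDigits s = arcDigits t) : s = t := by
  have key : ∀ N : ℕ, ⌊s * 2^N⌋ = ⌊t * 2^N⌋ := by
    intro N
    induction N with
    | zero =>
      simp only [pow_zero, mul_one]
      rw [Int.floor_eq_zero_iff.2 (by exact hs), Int.floor_eq_zero_iff.2 (by exact ht)]
    | succ n ih =>
      have hd : ⌊s * 2^(n+1)⌋ % 2 = ⌊t * 2^(n+1)⌋ % 2 := by
        have := congrFun h n
        simp only [arcDigits, decide_eq_decide] at this
        omega
      have hs2 : s * 2^(n+1) = 2 * (s * 2^n) := by ring
      have ht2 : t * 2^(n+1) = 2 * (t * 2^n) := by ring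
      rw [hs2, ht2] at hd ⊢
      rcases arc_floor_two_mul (s * 2^n) with h1 | h1 <;>
        rcases arc_floor_two_mul (t * 2^n) with h2 | h2 <;> omega
  by_contra hne
  wlog hlt : s < t generalizing s t
  · exact this ht hs h.symm (fun N => (key N).symm) (Ne.symm hne)
      (lt_of_le_of_ne (not_lt.1 hlt) (Ne.symm hne))
  obtain ⟨N, hN⟩ := pow_unbounded_of_one_lt (1/(t-s)) (one_lt_two (α := ℝ))
  have h1 : s * 2^N ≥ (⌊s * 2^N⌋ : ℝ) := Int.floor_le _
  have h2 : t * 2^N < (⌊t * 2^N⌋ : ℝ) + 1 := Int.lt_floor_add_one _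
  rw [key N] at h1
  have hts : 0 < t - s := by linarith
  have : (t - s) * 2^N < 1 := by linarith
  rw [div_lt_iff₀ hts] at hN
  nlinarith [pow_pos (zero_lt_two (α := ℝ)) N]

lemma arc_digits_measurable : Measurable arcDigits := by
  apply measurable_pi_lambda
  intro n
  exact (measurable_from_top (f := fun k : ℤ => decide (k % 2 = 1))).comp
    (Int.measurable_floor.comp (measurable_id.mul_const _))

open scoped ENNReal

lemma arc_exists_good_measure (Fr : Set ℝ) (hcl : IsClosed Fr)
    (hperf : ∀ x ∈ Fr, AccPt x (𝓟 Fr)) :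
    ∃ ν : Measure ℝ, IsFiniteMeasure ν ∧ (∀ x : ℝ, ν {x} = 0) ∧
      (∀ S : Set ℝ, S ∩ Fr = ∅ → ν S = 0) ∧
      (∀ a b : ℝ, a < b → (Fr ∩ Ioo a b).Nonempty → 0 < ν (Ioo a b)) := by
  classical
  set μ₀ : Measure ℝ := volume.restrict (Icc (0:ℝ) 1) with hμ₀
  have hμ₀univ : μ₀ univ = 1 := by
    rw [hμ₀, Measure.restrict_apply MeasurableSet.univ, univ_inter, Real.volume_Icc]
    norm_num
  set good : ℚ × ℚ → Prop := fun i => (Fr ∩ Ioo (i.1:ℝ) (i.2:ℝ)).Nonempty with hgood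
  set D : ℚ × ℚ → Set ℝ := fun i => closure (Fr ∩ Ioo (i.1:ℝ) (i.2:ℝ)) with hD
  have hDF : ∀ i, D i ⊆ Fr := fun i => closure_minimal inter_subset_left hcl
  have hDperf : ∀ i, good i → Perfect (D i) := by
    intro i hi
    refine ⟨isClosed_closure, fun x hx => ?_⟩
    rw [accPt_iff_nhds]
    intro U hU
    obtain ⟨c, hcU, hcS⟩ := mem_closure_iff_nhds.1 hx U hU
    rcases eq_or_ne c x with rfl | hne
    · have hx' : AccPt c (𝓟 Fr) := hperf c hcS.1
      rw [accPt_iff_nhds] at hx'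
      obtain ⟨y, ⟨hyU, hyF⟩, hyne⟩ := hx' (U ∩ Ioo (i.1:ℝ) (i.2:ℝ))
        (Filter.inter_mem hU ((isOpen_Ioo).mem_nhds hcS.2))
      exact ⟨y, ⟨hyU.1, subset_closure ⟨hyF, hyU.2⟩⟩, hyne⟩
    · exact ⟨c, ⟨hcU, subset_closure hcS⟩, hne⟩
  have hf : ∀ i : ℚ × ℚ, good i →
      ∃ f : (ℕ → Bool) → ℝ, range f ⊆ D i ∧ Continuous f ∧ Function.Injective f := by
    intro i hi
    exact (hDperf i hi).exists_nat_bool_injection ⟨hi.choose, subset_closure hi.choose_spec⟩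
  choose f hfr hfc hfi using hf
  set νi : ℚ × ℚ → Measure ℝ := fun i =>
    if h : good i then Measure.map (f i h ∘ arcDigits) μ₀ else 0 with hνi
  have hmeas : ∀ i (h : good i), Measurable (f i h ∘ arcDigits) :=
    fun i h => (hfc i h).measurable.comp arc_digits_measurable
  have hνi_apply : ∀ i (h : good i) (S : Set ℝ), MeasurableSet S →
      νi i S = μ₀ ((f i h ∘ arcDigits) ⁻¹' S) := by
    intro i h S hS
    rw [hνi]; simp only [dif_pos h]
    exact Measure.map_apply (hmeas i h) hS
  set w : ℚ × ℚ → ℝ≥0∞ := fun i => (1/2)^(Encodable.encode i) with hw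
  set ν : Measure ℝ := Measure.sum (fun i => w i • νi i) with hν
  have hν_apply : ∀ S : Set ℝ, MeasurableSet S → ν S = ∑' i, w i * νi i S := by
    intro S hS
    rw [hν, Measure.sum_apply _ hS]
    rfl
  have hνi_le_one : ∀ i (S : Set ℝ), νi i S ≤ 1 := by
    intro i S
    by_cases h : good i
    · calc νi i S ≤ νi i univ := measure_mono (subset_univ _)
        _ = μ₀ univ := by rw [hνi_apply i h univ MeasurableSet.univ, preimage_univ]
        _ = 1 := hμ₀univ
    · rw [hνi]; simp [dif_neg h]
  have hwsum : ∑' i : ℚ × ℚ, w i ≤ 2 := by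
    calc ∑' i : ℚ × ℚ, w i ≤ ∑' n : ℕ, ((1:ℝ≥0∞)/2)^n :=
          ENNReal.tsum_comp_le_tsum_of_injective Encodable.encode_injective _
      _ = 2 := by rw [ENNReal.tsum_geometric]; norm_num
  have hfin : IsFiniteMeasure ν := by
    refine ⟨?_⟩
    rw [hν_apply univ MeasurableSet.univ]
    calc ∑' i, w i * νi i univ ≤ ∑' i, w i * 1 :=
          ENNReal.tsum_le_tsum (fun i => mul_le_mul_right (hνi_le_one i univ) _)
      _ ≤ 2 := by simpa using hwsum
      _ < ⊤ := by norm_num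
  refine ⟨ν, hfin, ?_, ?_, ?_⟩
  · -- atomless
    intro x
    rw [hν_apply _ (measurableSet_singleton x)]
    have : ∀ i, νi i {x} = 0 := by
      intro i
      by_cases h : good i
      · rw [hνi_apply i h _ (measurableSet_singleton x)]
        set S := (f i h ∘ arcDigits) ⁻¹' {x} with hS
        have hsub : S ∩ Icc 0 1 ⊆ (S ∩ Ico 0 1) ∪ {1} := by
          intro y ⟨hyS, hy0, hy1⟩
          rcases lt_or_eq_of_le hy1 with h1 | h1
          · exact Or.inl ⟨hyS, hy0, h1⟩
          · exact Or.inr (by simp [h1])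
        have hss : (S ∩ Ico 0 1).Subsingleton := by
          intro u hu v hv
          have : arcDigits u = arcDigits v := by
            apply hfi i h
            have hu' : f i h (arcDigits u) = x := hu.1
            have hv' : f i h (arcDigits v) = x := hv.1
            rw [hu', hv']
          exact arc_digits_inj hu.2 hv.2 this
        have : μ₀ S ≤ volume ((S ∩ Ico 0 1) ∪ {1}) := by
          rw [hμ₀, Measure.restrict_apply₀]
          · exact measure_mono hsub
          · exact (hmeas i h (measurableSet_singleton x)).nullMeasurableSet
        have hcnt : ((S ∩ Ico 0 1) ∪ {1} : Set ℝ).Countable :=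
          (hss.countable).union (countable_singleton 1)
        have := le_trans this (le_of_eq (hcnt.measure_zero volume))
        exact le_antisymm (le_trans (le_of_eq rfl) this) (zero_le)
      · rw [hνi]; simp [dif_neg h]
    simp [this]
  · -- support
    intro S hS
    have hsub : S ⊆ Frᶜ := fun x hx hxF =>
      (eq_empty_iff_forall_notMem.1 hS x) ⟨hx, hxF⟩
    have : ν Frᶜ = 0 := by
      rw [hν_apply _ hcl.measurableSet.compl]
      have : ∀ i, νi i Frᶜ = 0 := by
        intro i
        by_cases h : good i
        · rw [hνi_apply i h _ hcl.measurableSet.compl]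
          have : (f i h ∘ arcDigits) ⁻¹' Frᶜ = ∅ := by
            ext y
            simp only [mem_preimage, mem_compl_iff, mem_empty_iff_false, iff_false, not_not]
            exact hDF i (hfr i h (mem_range_self _))
          rw [this, measure_empty]
        · rw [hνi]; simp [dif_neg h]
      simp [this]
    exact le_antisymm (le_trans (measure_mono hsub) (le_of_eq this)) (zero_le)
  · -- positivity
    intro a b hab ⟨c, hcF, hca, hcb⟩
    obtain ⟨p, hap, hpc⟩ := exists_rat_btwn hca
    obtain ⟨q, hcq, hqb⟩ := exists_rat_btwn hcb
    set i : ℚ × ℚ := (p, q) with hi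
    have hgi : good i := ⟨c, hcF, hpc, hcq⟩
    have h1 : νi i (Ioo a b) = 1 := by
      rw [hνi_apply i hgi _ measurableSet_Ioo]
      have : (f i hgi ∘ arcDigits) ⁻¹' (Ioo a b) = univ := by
        ext y
        simp only [mem_preimage, mem_univ, iff_true]
        have hy : (f i hgi ∘ arcDigits) y ∈ D i := hfr i hgi (mem_range_self _)
        have hDsub : D i ⊆ Icc (p:ℝ) q :=
          closure_minimal (fun z hz => ⟨le_of_lt hz.2.1, le_of_lt hz.2.2⟩) isClosed_Icc
        have := hDsub hy
        exact ⟨lt_of_lt_of_le hap this.1, lt_of_le_of_lt this.2 hqb⟩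
      rw [this]
      exact hμ₀univ
    calc (0:ℝ≥0∞) < w i * 1 := by
          rw [mul_one, hw]
          exact ENNReal.pow_pos (by norm_num) _
      _ = w i * νi i (Ioo a b) := by rw [h1]
      _ ≤ ∑' j, w j * νi j (Ioo a b) := ENNReal.le_tsum i
      _ = ν (Ioo a b) := (hν_apply _ measurableSet_Ioo).symm


variable {X : Type} [TopologicalSpace X] [T2Space X]

/-- The family of admissible closed sets, at the real-number level. -/
def arcFam (σr : ℝ → X) : Set (Set ℝ) :=
  {F | F ⊆ Icc 0 1 ∧ IsClosed F ∧ (σr 0 ∈ σr '' F) ∧ (σr 1 ∈ σr '' F) ∧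
    ∀ a ∈ F, ∀ b ∈ F, a < b → Ioo a b ∩ F = ∅ → σr a = σr b}

lemma arc_compact_of_mem {σr : ℝ → X} {F : Set ℝ} (hF : F ∈ arcFam σr) : IsCompact F :=
  isCompact_Icc.of_isClosed_subset hF.2.1 hF.1

lemma arc_exists_minimal (σr : ℝ → X) (hσ : Continuous σr) :
    ∃ F ∈ arcFam σr, ∀ G ∈ arcFam σr, G ⊆ F → G = F := by
  classical
  have key : ∀ c ⊆ arcFam σr, IsChain (· ⊆ ·) c → c.Nonempty →
      ∃ lb ∈ arcFam σr, ∀ s ∈ c, lb ⊆ s := by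
    intro c hc hchain hcne
    have hne : Nonempty ↥c := hcne.to_subtype
    -- directedness of the chain under ⊇
    have hdir : ∀ (K : ↥c → Set ℝ), (∀ G H : ↥c, (G:Set (ℝ)) ⊆ H → K G ⊆ K H) →
        Directed (· ⊇ ·) K := by
      intro K hmono G H
      rcases hchain.total G.2 H.2 with h | h
      · exact ⟨G, le_refl _, hmono G H h⟩
      · exact ⟨H, hmono H G h, le_refl _⟩
    have hinter : ∀ (T : Set ℝ), IsClosed T → (∀ G ∈ c, (G ∩ T).Nonempty) →
        (⋂₀ c ∩ T).Nonempty := by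
      intro T hT hGT
      have := IsCompact.nonempty_iInter_of_directed_nonempty_isCompact_isClosed
        (fun G : ↥c => (G : Set ℝ) ∩ T)
        (hdir _ (fun G H h => inter_subset_inter_left _ h))
        (fun G => hGT G G.2)
        (fun G => (arc_compact_of_mem (hc G.2)).inter_right hT)
        (fun G => ((hc G.2).2.1).inter hT)
      obtain ⟨x, hx⟩ := this
      refine ⟨x, ?_, (mem_iInter.1 hx hne.some).2⟩
      exact fun G hG => (mem_iInter.1 hx ⟨G, hG⟩).1
    obtain ⟨G₀, hG₀⟩ := hcne
    refine ⟨⋂₀ c, ⟨?_, ?_, ?_, ?_, ?_⟩, fun s hs => sInter_subset_of_mem hs⟩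
    · exact (sInter_subset_of_mem hG₀).trans (hc hG₀).1
    · exact isClosed_sInter (fun G hG => (hc hG).2.1)
    · -- σr 0 in image
      obtain ⟨x, hx1, hx2⟩ := hinter {y | σr y = σr 0}
        (isClosed_eq hσ continuous_const)
        (fun G hG => by
          obtain ⟨z, hz, hz2⟩ := (hc hG).2.2.1
          exact ⟨z, hz, hz2⟩)
      exact ⟨x, hx1, hx2⟩
    · obtain ⟨x, hx1, hx2⟩ := hinter {y | σr y = σr 1}
        (isClosed_eq hσ continuous_const)
        (fun G hG => by
          obtain ⟨z, hz, hz2⟩ := (hc hG).2.2.2.1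
          exact ⟨z, hz, hz2⟩)
      exact ⟨x, hx1, hx2⟩
    · -- gap condition
      intro a ha b hb hab hgap
      -- for every a' b' with a < a' < b' < b, some G in chain misses Icc a' b',
      -- yielding gap endpoints close to a and b
      have main : ∀ a' b' : ℝ, a < a' → a' < b' → b' < b →
          ∃ α β : ℝ, α ∈ Icc a a' ∧ β ∈ Icc b' b ∧ σr α = σr β := by
        intro a' b' haa hab' hbb
        have hmiss : ∃ G ∈ c, G ∩ Icc a' b' = ∅ := by
          by_contra hcon
          push_neg at hcon
          have : (⋂₀ c ∩ Icc a' b').Nonempty := by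
            apply hinter _ isClosed_Icc
            intro G hG
            rcases eq_empty_or_nonempty (G ∩ Icc a' b') with he | hne'
            · exact absurd he (nonempty_iff_ne_empty.1 (hcon G hG))
            · exact hne'
          obtain ⟨x, hx1, hx2⟩ := this
          have : x ∈ Ioo a b ∩ ⋂₀ c :=
            ⟨⟨lt_of_lt_of_le haa hx2.1, lt_of_le_of_lt hx2.2 hbb⟩, hx1⟩
          rw [hgap] at this
          exact this
        obtain ⟨G, hGc, hGmiss⟩ := hmiss
        have haG : a ∈ G := sInter_subset_of_mem hGc ha
        have hbG : b ∈ G := sInter_subset_of_mem hGc hb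
        have hGcomp := arc_compact_of_mem (hc hGc)
        -- α = sup (G ∩ [a,a']), β = inf (G ∩ [b',b])
        have hSa : (G ∩ Icc a a').Nonempty := ⟨a, haG, le_refl a, le_of_lt haa⟩
        have hSb : (G ∩ Icc b' b).Nonempty := ⟨b, hbG, le_of_lt hbb, le_refl b⟩
        have hSacomp : IsCompact (G ∩ Icc a a') := hGcomp.inter_right isClosed_Icc
        have hSbcomp : IsCompact (G ∩ Icc b' b) := hGcomp.inter_right isClosed_Icc
        set α := sSup (G ∩ Icc a a') with hα
        set β := sInf (G ∩ Icc b' b) with hβ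
        have hαmem : α ∈ G ∩ Icc a a' := hSacomp.sSup_mem hSa
        have hβmem : β ∈ G ∩ Icc b' b := hSbcomp.sInf_mem hSb
        have hαβ : α < β := lt_of_le_of_lt hαmem.2.2 (lt_of_lt_of_le hab' hβmem.2.1)
        have hgapG : Ioo α β ∩ G = ∅ := by
          ext x
          simp only [mem_inter_iff, mem_Ioo, mem_empty_iff_false, iff_false, not_and]
          rintro ⟨hx1, hx2⟩ hxG
          rcases le_or_gt x a' with h1 | h1
          · have : x ∈ G ∩ Icc a a' := ⟨hxG, le_trans hαmem.2.1 (le_of_lt hx1), h1⟩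
            exact absurd (le_csSup (hSacomp.bddAbove) this) (not_le.2 hx1)
          rcases le_or_gt b' x with h2 | h2
          · have : x ∈ G ∩ Icc b' b := ⟨hxG, h2, le_trans (le_of_lt hx2) hβmem.2.2⟩
            exact absurd (csInf_le (hSbcomp.bddBelow) this) (not_le.2 hx2)
          · exact absurd (⟨hxG, le_of_lt h1, le_of_lt h2⟩ : x ∈ G ∩ Icc a' b')
              (eq_empty_iff_forall_notMem.1 hGmiss x)
        exact ⟨α, β, hαmem.2, hβmem.2, (hc hGc).2.2.2.2 α hαmem.1 β hβmem.1 hαβ hgapG⟩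
      -- take limits along n
      have hd : 0 < b - a := sub_pos.2 hab
      have seq : ∀ n : ℕ, ∃ α β : ℝ, α ∈ Icc a (a + (b-a)/(n+3)) ∧
          β ∈ Icc (b - (b-a)/(n+3)) b ∧ σr α = σr β := by
        intro n
        have hpos : 0 < (b-a)/(n+3) := by positivity
        have hlt : (b-a)/(n+3) < (b-a)/2 := by
          apply div_lt_div_of_pos_left hd (by norm_num)
          push_cast; linarith [Nat.cast_nonneg (α := ℝ) n]
        apply main <;> linarith
      choose αs βs hαs hβs hσeq using seq
      have hαlim : Tendsto αs atTop (nhds a) := by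
        apply tendsto_of_tendsto_of_tendsto_of_le_of_le (g := fun _ => a)
          (h := fun n : ℕ => a + (b-a)/(n+3)) tendsto_const_nhds
        · rw [show nhds a = nhds (a + 0) by ring_nf]
          apply Tendsto.const_add
          apply Tendsto.div_atTop tendsto_const_nhds
          apply tendsto_atTop_add_const_right
          exact tendsto_natCast_atTop_atTop
        · exact fun n => (hαs n).1
        · exact fun n => (hαs n).2
      have hβlim : Tendsto βs atTop (nhds b) := by
        apply tendsto_of_tendsto_of_tendsto_of_le_of_le
          (g := fun n : ℕ => b - (b-a)/(n+3)) (h := fun _ => b)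
        · rw [show nhds b = nhds (b - 0) by ring_nf]
          apply Tendsto.const_sub
          apply Tendsto.div_atTop tendsto_const_nhds
          apply tendsto_atTop_add_const_right
          exact tendsto_natCast_atTop_atTop
        · exact tendsto_const_nhds
        · exact fun n => (hβs n).1
        · exact fun n => (hβs n).2
      have h1 : Tendsto (σr ∘ αs) atTop (nhds (σr a)) := (hσ.tendsto a).comp hαlim
      have h2 : Tendsto (σr ∘ αs) atTop (nhds (σr b)) := by
        have : σr ∘ αs = σr ∘ βs := funext (fun n => hσeq n)
        rw [this]
        exact (hσ.tendsto b).comp hβlim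
      exact tendsto_nhds_unique h1 h2
  have hIcc : Icc (0:ℝ) 1 ∈ arcFam σr := by
    refine ⟨Subset.rfl, isClosed_Icc, ⟨0, ⟨le_refl 0, zero_le_one⟩, rfl⟩,
      ⟨1, ⟨zero_le_one, le_refl 1⟩, rfl⟩, ?_⟩
    intro a ha b hb hab hgap
    exfalso
    have : (a+b)/2 ∈ Ioo a b ∩ Icc 0 1 := by
      constructor
      · constructor <;> [linarith; linarith]
      · constructor <;> [linarith [ha.1, hb.1]; linarith [ha.2, hb.2]]
    rw [hgap] at this
    exact this
  obtain ⟨F, _, hmem, hmin⟩ := zorn_superset_nonempty (arcFam σr) key _ hIcc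
  exact ⟨F, hmem, fun G hG hGF => le_antisymm hGF (hmin hG hGF)⟩

section Structure

variable {σr : ℝ → X} {Fr : Set ℝ}

lemma arc_fam_nonempty (hmem : Fr ∈ arcFam σr) : Fr.Nonempty := by
  obtain ⟨z, hz, -⟩ := hmem.2.2.1; exact ⟨z, hz⟩

lemma arc_sInf_mem (hmem : Fr ∈ arcFam σr) : sInf Fr ∈ Fr :=
  (arc_compact_of_mem hmem).sInf_mem (arc_fam_nonempty hmem)

lemma arc_sSup_mem (hmem : Fr ∈ arcFam σr) : sSup Fr ∈ Fr :=
  (arc_compact_of_mem hmem).sSup_mem (arc_fam_nonempty hmem)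

/-- C1: the extreme points of a minimal admissible set map to the endpoints. -/
lemma arc_endpoints (hσ : Continuous σr) (hmem : Fr ∈ arcFam σr)
    (hmin : ∀ G ∈ arcFam σr, G ⊆ Fr → G = Fr) (hne : σr 0 ≠ σr 1) :
    (σr (sInf Fr) = σr 0 ∧ σr (sSup Fr) = σr 1) ∨
    (σr (sInf Fr) = σr 1 ∧ σr (sSup Fr) = σr 0) := by
  classical
  have hcomp := arc_compact_of_mem hmem
  set P0 := Fr ∩ {y | σr y = σr 0} with hP0
  set P1 := Fr ∩ {y | σr y = σr 1} with hP1
  have hP0c : IsCompact P0 := hcomp.inter_right (isClosed_eq hσ continuous_const)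
  have hP1c : IsCompact P1 := hcomp.inter_right (isClosed_eq hσ continuous_const)
  have hP0ne : P0.Nonempty := by
    obtain ⟨z, hz, hz2⟩ := hmem.2.2.1; exact ⟨z, hz, hz2⟩
  have hP1ne : P1.Nonempty := by
    obtain ⟨z, hz, hz2⟩ := hmem.2.2.2.1; exact ⟨z, hz, hz2⟩
  set l := sSup P0 with hl
  have hlmem : l ∈ P0 := hP0c.sSup_mem hP0ne
  -- helper: for u < v in Fr with σr u/σr v the two endpoint values, Fr ⊆ Icc u v
  have star : ∀ u v : ℝ, u ∈ Fr → v ∈ Fr → u < v →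
      ((σr u = σr 0 ∧ σr v = σr 1) ∨ (σr u = σr 1 ∧ σr v = σr 0)) → Fr ⊆ Icc u v := by
    intro u v hu hv huv hor
    have hstar : Fr ∩ Icc u v ∈ arcFam σr := by
      refine ⟨(inter_subset_left).trans hmem.1, hmem.2.1.inter isClosed_Icc, ?_, ?_, ?_⟩
      · rcases hor with ⟨h1, h2⟩ | ⟨h1, h2⟩
        · exact ⟨u, ⟨hu, le_refl u, le_of_lt huv⟩, h1⟩
        · exact ⟨v, ⟨hv, le_of_lt huv, le_refl v⟩, h2⟩
      · rcases hor with ⟨h1, h2⟩ | ⟨h1, h2⟩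
        · exact ⟨v, ⟨hv, le_of_lt huv, le_refl v⟩, h2⟩
        · exact ⟨u, ⟨hu, le_refl u, le_of_lt huv⟩, h1⟩
      · intro a ha b hb hab hgap
        apply hmem.2.2.2.2 a ha.1 b hb.1 hab
        ext x
        simp only [mem_inter_iff, mem_Ioo, mem_empty_iff_false, iff_false, not_and]
        rintro ⟨hx1, hx2⟩ hxF
        have : x ∈ Ioo a b ∩ (Fr ∩ Icc u v) :=
          ⟨⟨hx1, hx2⟩, hxF, le_trans ha.2.1 (le_of_lt hx1), le_trans (le_of_lt hx2) hb.2.2⟩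
        rw [hgap] at this
        exact this
    have := hmin _ hstar inter_subset_left
    intro x hx
    rw [← this] at hx
    exact hx.2
  by_cases hcase : (P1 ∩ Ici l).Nonempty
  · set r := sInf (P1 ∩ Ici l) with hr
    have hrmem : r ∈ P1 ∩ Ici l := (hP1c.inter_right isClosed_Ici).sInf_mem hcase
    have hlr : l < r := lt_of_le_of_ne hrmem.2 (by
      intro h; rw [← h] at hrmem; exact hne (hlmem.2.symm.trans hrmem.1.2))
    have hsub := star l r hlmem.1 hrmem.1.1 hlr (Or.inl ⟨hlmem.2, hrmem.1.2⟩)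
    have h1 : sInf Fr = l := le_antisymm (csInf_le hcomp.bddBelow hlmem.1)
      (le_csInf (arc_fam_nonempty hmem) (fun x hx => (hsub hx).1))
    have h2 : sSup Fr = r := le_antisymm
      (csSup_le (arc_fam_nonempty hmem) (fun x hx => (hsub hx).2))
      (le_csSup hcomp.bddAbove hrmem.1.1)
    exact Or.inl ⟨h1 ▸ hlmem.2, h2 ▸ hrmem.1.2⟩
  · set u := sSup P1 with hu
    have humem : u ∈ P1 := hP1c.sSup_mem hP1ne
    have hul : u < l := by
      by_contra h
      exact hcase ⟨u, humem, not_lt.1 h⟩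
    have hsub := star u l humem.1 hlmem.1 hul (Or.inr ⟨humem.2, hlmem.2⟩)
    have h1 : sInf Fr = u := le_antisymm (csInf_le hcomp.bddBelow humem.1)
      (le_csInf (arc_fam_nonempty hmem) (fun x hx => (hsub hx).1))
    have h2 : sSup Fr = l := le_antisymm
      (csSup_le (arc_fam_nonempty hmem) (fun x hx => (hsub hx).2))
      (le_csSup hcomp.bddAbove hlmem.1)
    exact Or.inr ⟨h1 ▸ humem.2, h2 ▸ hlmem.2⟩

/-- C2: if σr takes equal values at two points of a minimal admissible set,
the open interval between them misses the set. -/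
lemma arc_gap_forcing (hσ : Continuous σr) (hmem : Fr ∈ arcFam σr)
    (hmin : ∀ G ∈ arcFam σr, G ⊆ Fr → G = Fr) (hne : σr 0 ≠ σr 1)
    {a b : ℝ} (ha : a ∈ Fr) (hb : b ∈ Fr) (hab : a < b) (heq : σr a = σr b) :
    Ioo a b ∩ Fr = ∅ := by
  classical
  have hcomp := arc_compact_of_mem hmem
  have hm := arc_sInf_mem hmem
  have hM := arc_sSup_mem hmem
  have hma : sInf Fr ≤ a := csInf_le hcomp.bddBelow ha
  have hMb : b ≤ sSup Fr := le_csSup hcomp.bddAbove hb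
  have hkey : Fr \ Ioo a b ∈ arcFam σr := by
    refine ⟨(diff_subset).trans hmem.1, hmem.2.1.sdiff isOpen_Ioo, ?_, ?_, ?_⟩
    · rcases arc_endpoints hσ hmem hmin hne with ⟨h1, h2⟩ | ⟨h1, h2⟩
      · exact ⟨sInf Fr, ⟨hm, fun hc => absurd hc.1 (not_lt.2 hma)⟩, h1⟩
      · exact ⟨sSup Fr, ⟨hM, fun hc => absurd hc.2 (not_lt.2 hMb)⟩, h2⟩
    · rcases arc_endpoints hσ hmem hmin hne with ⟨h1, h2⟩ | ⟨h1, h2⟩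
      · exact ⟨sSup Fr, ⟨hM, fun hc => absurd hc.2 (not_lt.2 hMb)⟩, h2⟩
      · exact ⟨sInf Fr, ⟨hm, fun hc => absurd hc.1 (not_lt.2 hma)⟩, h1⟩
    · intro c hc d hd hcd hgap
      by_cases hmeet : (Ioo c d ∩ Ioo a b).Nonempty
      · obtain ⟨x, hx1, hx2⟩ := hmeet
        have hca : c ≤ a := by
          by_contra h
          exact hc.2 ⟨not_le.1 h, lt_trans hx1.1 hx2.2⟩
        have hbd : b ≤ d := by
          by_contra h
          exact hd.2 ⟨lt_trans hx2.1 hx1.2, not_le.1 h⟩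
        have hσca : σr c = σr a := by
          rcases eq_or_lt_of_le hca with rfl | hca'
          · rfl
          · apply hmem.2.2.2.2 c hc.1 a ha hca'
            ext y
            simp only [mem_inter_iff, mem_Ioo, mem_empty_iff_false, iff_false, not_and]
            rintro ⟨hy1, hy2⟩ hyF
            have hyd : y < d := lt_of_lt_of_le hy2 (le_trans (le_of_lt hab) hbd)
            have : y ∈ Ioo c d ∩ (Fr \ Ioo a b) :=
              ⟨⟨hy1, hyd⟩, hyF, fun hc' => absurd hc'.1 (not_lt.2 (le_of_lt hy2))⟩
            rw [hgap] at this
            exact this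
        have hσbd : σr b = σr d := by
          rcases eq_or_lt_of_le hbd with rfl | hbd'
          · rfl
          · apply hmem.2.2.2.2 b hb d hd.1 hbd'
            ext y
            simp only [mem_inter_iff, mem_Ioo, mem_empty_iff_false, iff_false, not_and]
            rintro ⟨hy1, hy2⟩ hyF
            have hyc : c < y := lt_of_le_of_lt (le_trans hca (le_of_lt hab)) hy1
            have : y ∈ Ioo c d ∩ (Fr \ Ioo a b) :=
              ⟨⟨hyc, hy2⟩, hyF, fun hc' => absurd hc'.2 (not_lt.2 (le_of_lt hy1))⟩
            rw [hgap] at this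
            exact this
        rw [hσca, heq, hσbd]
      · apply hmem.2.2.2.2 c hc.1 d hd.1 hcd
        ext y
        simp only [mem_inter_iff, mem_Ioo, mem_empty_iff_false, iff_false, not_and]
        rintro ⟨hy1, hy2⟩ hyF
        have hyab : y ∉ Ioo a b := fun hy => hmeet ⟨y, ⟨hy1, hy2⟩, hy⟩
        have : y ∈ Ioo c d ∩ (Fr \ Ioo a b) := ⟨⟨hy1, hy2⟩, hyF, hyab⟩
        rw [hgap] at this
        exact this
  have := hmin _ hkey diff_subset
  ext x
  simp only [mem_inter_iff, mem_Ioo, mem_empty_iff_false, iff_false, not_and]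
  rintro ⟨hx1, hx2⟩ hxF
  rw [← this] at hxF
  exact hxF.2 ⟨hx1, hx2⟩

end Structure

section Perfect

variable {σr : ℝ → X} {Fr : Set ℝ}

lemma arc_sInf_lt_sSup (hσ : Continuous σr) (hmem : Fr ∈ arcFam σr)
    (hmin : ∀ G ∈ arcFam σr, G ⊆ Fr → G = Fr) (hne : σr 0 ≠ σr 1) :
    sInf Fr < sSup Fr := by
  have h1 : sInf Fr ≤ sSup Fr :=
    csInf_le_csSup (arc_fam_nonempty hmem) (arc_compact_of_mem hmem).bddBelow
      (arc_compact_of_mem hmem).bddAbove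
  rcases eq_or_lt_of_le h1 with h | h
  · exfalso
    rcases arc_endpoints hσ hmem hmin hne with ⟨e1, e2⟩ | ⟨e1, e2⟩
    · exact hne (e1.symm.trans (h ▸ e2))
    · exact hne (e2.symm.trans (h ▸ e1))
  · exact h

lemma arc_perfect (hσ : Continuous σr) (hmem : Fr ∈ arcFam σr)
    (hmin : ∀ G ∈ arcFam σr, G ⊆ Fr → G = Fr) (hne : σr 0 ≠ σr 1) :
    ∀ x ∈ Fr, AccPt x (𝓟 Fr) := by
  classical
  intro x hx
  by_contra hacc
  rw [accPt_iff_nhds] at hacc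
  push_neg at hacc
  obtain ⟨U, hU, hUiso⟩ := hacc
  obtain ⟨ε, hε, hball⟩ := Metric.mem_nhds_iff.1 hU
  rw [Real.ball_eq_Ioo] at hball
  have hiso : ∀ y ∈ Fr ∩ Ioo (x-ε) (x+ε), y = x := by
    intro y hy
    exact hUiso y ⟨hball hy.2, hy.1⟩
  have hdiffeq : Fr \ {x} = Fr ∩ (Ioo (x-ε) (x+ε))ᶜ := by
    ext y
    constructor
    · rintro ⟨hyF, hyx⟩
      refine ⟨hyF, fun hyI => hyx (hiso y ⟨hyF, hyI⟩)⟩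
    · rintro ⟨hyF, hyI⟩
      refine ⟨hyF, fun h => hyI ?_⟩
      rw [mem_singleton_iff] at h
      rw [h]
      exact ⟨by linarith, by linarith⟩
  have hdiffclosed : IsClosed (Fr \ {x}) := by
    rw [hdiffeq]
    exact hmem.2.1.inter (isClosed_compl_iff.2 isOpen_Ioo)
  have hmM := arc_sInf_lt_sSup hσ hmem hmin hne
  have hm := arc_sInf_mem hmem
  have hM := arc_sSup_mem hmem
  have hcomp := arc_compact_of_mem hmem
  -- right neighbor when x < sSup Fr
  have hright : x < sSup Fr → ∃ b ∈ Fr \ {x}, x < b ∧ Ioo x b ∩ Fr = ∅ := by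
    intro hxM
    have hSne : ((Fr \ {x}) ∩ Ici x).Nonempty := ⟨sSup Fr, ⟨hM, ne_of_gt hxM⟩, le_of_lt hxM⟩
    have hScomp : IsCompact ((Fr \ {x}) ∩ Ici x) :=
      hcomp.of_isClosed_subset (hdiffclosed.inter isClosed_Ici)
        ((inter_subset_left).trans diff_subset)
    set b := sInf ((Fr \ {x}) ∩ Ici x) with hb
    have hbmem := hScomp.sInf_mem hSne
    have hxb : x < b := lt_of_le_of_ne hbmem.2 (fun h => hbmem.1.2 h.symm)
    refine ⟨b, hbmem.1, hxb, ?_⟩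
    ext y
    simp only [mem_inter_iff, mem_Ioo, mem_empty_iff_false, iff_false, not_and]
    rintro ⟨hy1, hy2⟩ hyF
    have : y ∈ (Fr \ {x}) ∩ Ici x := ⟨⟨hyF, ne_of_gt hy1⟩, le_of_lt hy1⟩
    exact absurd (csInf_le hScomp.bddBelow this) (not_le.2 hy2)
  have hleft : sInf Fr < x → ∃ a ∈ Fr \ {x}, a < x ∧ Ioo a x ∩ Fr = ∅ := by
    intro hmx
    have hSne : ((Fr \ {x}) ∩ Iic x).Nonempty := ⟨sInf Fr, ⟨hm, ne_of_lt hmx⟩, le_of_lt hmx⟩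
    have hScomp : IsCompact ((Fr \ {x}) ∩ Iic x) :=
      hcomp.of_isClosed_subset (hdiffclosed.inter isClosed_Iic)
        ((inter_subset_left).trans diff_subset)
    set a := sSup ((Fr \ {x}) ∩ Iic x) with ha
    have hamem := hScomp.sSup_mem hSne
    have hax : a < x := lt_of_le_of_ne hamem.2 (fun h => hamem.1.2 h)
    refine ⟨a, hamem.1, hax, ?_⟩
    ext y
    simp only [mem_inter_iff, mem_Ioo, mem_empty_iff_false, iff_false, not_and]
    rintro ⟨hy1, hy2⟩ hyF
    have : y ∈ (Fr \ {x}) ∩ Iic x := ⟨⟨hyF, ne_of_lt hy2⟩, le_of_lt hy2⟩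
    exact absurd (le_csSup hScomp.bddAbove this) (not_le.2 hy1)
  -- Fr \ {x} is admissible
  have hkey : Fr \ {x} ∈ arcFam σr := by
    refine ⟨(diff_subset).trans hmem.1, hdiffclosed, ?_, ?_, ?_⟩
    · -- σr 0 in image
      rcases arc_endpoints hσ hmem hmin hne with ⟨e1, e2⟩ | ⟨e1, e2⟩
      · by_cases hxm : x = sInf Fr
        · obtain ⟨b, hbmem, hxb, hgap⟩ := hright (hxm ▸ hmM)
          have : σr x = σr b := hmem.2.2.2.2 x hx b hbmem.1 hxb hgap
          exact ⟨b, hbmem, by rw [← this, hxm, e1]⟩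
        · exact ⟨sInf Fr, ⟨hm, fun h => hxm (by rwa [mem_singleton_iff, eq_comm] at h)⟩, e1⟩
      · by_cases hxM : x = sSup Fr
        · obtain ⟨a, hamem, hax, hgap⟩ := hleft (hxM ▸ hmM)
          have : σr a = σr x := hmem.2.2.2.2 a hamem.1 x hx hax hgap
          exact ⟨a, hamem, by rw [this, hxM, e2]⟩
        · exact ⟨sSup Fr, ⟨hM, fun h => hxM (by rwa [mem_singleton_iff, eq_comm] at h)⟩, e2⟩
    · -- σr 1 in image
      rcases arc_endpoints hσ hmem hmin hne with ⟨e1, e2⟩ | ⟨e1, e2⟩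
      · by_cases hxM : x = sSup Fr
        · obtain ⟨a, hamem, hax, hgap⟩ := hleft (hxM ▸ hmM)
          have : σr a = σr x := hmem.2.2.2.2 a hamem.1 x hx hax hgap
          exact ⟨a, hamem, by rw [this, hxM, e2]⟩
        · exact ⟨sSup Fr, ⟨hM, fun h => hxM (by rwa [mem_singleton_iff, eq_comm] at h)⟩, e2⟩
      · by_cases hxm : x = sInf Fr
        · obtain ⟨b, hbmem, hxb, hgap⟩ := hright (hxm ▸ hmM)
          have : σr x = σr b := hmem.2.2.2.2 x hx b hbmem.1 hxb hgap
          exact ⟨b, hbmem, by rw [← this, hxm, e1]⟩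
        · exact ⟨sInf Fr, ⟨hm, fun h => hxm (by rwa [mem_singleton_iff, eq_comm] at h)⟩, e1⟩
    · -- gap condition
      intro c hc d hd hcd hgap
      by_cases hxin : x ∈ Ioo c d
      · have hgapl : Ioo c x ∩ Fr = ∅ := by
          ext y
          simp only [mem_inter_iff, mem_Ioo, mem_empty_iff_false, iff_false, not_and]
          rintro ⟨hy1, hy2⟩ hyF
          have : y ∈ Ioo c d ∩ (Fr \ {x}) :=
            ⟨⟨hy1, lt_trans hy2 hxin.2⟩, hyF, ne_of_lt hy2⟩
          rw [hgap] at this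
          exact this
        have hgapr : Ioo x d ∩ Fr = ∅ := by
          ext y
          simp only [mem_inter_iff, mem_Ioo, mem_empty_iff_false, iff_false, not_and]
          rintro ⟨hy1, hy2⟩ hyF
          have : y ∈ Ioo c d ∩ (Fr \ {x}) :=
            ⟨⟨lt_trans hxin.1 hy1, hy2⟩, hyF, ne_of_gt hy1⟩
          rw [hgap] at this
          exact this
        have h1 : σr c = σr x := hmem.2.2.2.2 c hc.1 x hx hxin.1 hgapl
        have h2 : σr x = σr d := hmem.2.2.2.2 x hx d hd.1 hxin.2 hgapr
        exact h1.trans h2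
      · apply hmem.2.2.2.2 c hc.1 d hd.1 hcd
        ext y
        simp only [mem_inter_iff, mem_Ioo, mem_empty_iff_false, iff_false, not_and]
        rintro ⟨hy1, hy2⟩ hyF
        have hyx : y ≠ x := fun h => hxin (h ▸ ⟨hy1, hy2⟩)
        have : y ∈ Ioo c d ∩ (Fr \ {x}) := ⟨⟨hy1, hy2⟩, hyF, hyx⟩
        rw [hgap] at this
        exact this
  have heq := hmin _ hkey diff_subset
  rw [← heq] at hx
  exact hx.2 rfl

end Perfect

section Kappa

open scoped Classical in
noncomputable def arcKappa (Fr : Set ℝ) (t : ℝ) : ℝ :=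
  if (Fr ∩ Iic t).Nonempty then sSup (Fr ∩ Iic t) else sInf Fr

variable {σr : ℝ → X} {Fr : Set ℝ}

lemma arcKappa_mem_inter (hcomp : IsCompact Fr) {t : ℝ} (h : (Fr ∩ Iic t).Nonempty) :
    sSup (Fr ∩ Iic t) ∈ Fr ∩ Iic t :=
  (hcomp.inter_right isClosed_Iic).sSup_mem h

lemma arcKappa_mem (hcomp : IsCompact Fr) (hne : Fr.Nonempty) (t : ℝ) :
    arcKappa Fr t ∈ Fr := by
  unfold arcKappa
  split_ifs with h
  · exact (arcKappa_mem_inter hcomp h).1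
  · exact hcomp.sInf_mem hne

lemma arcKappa_self (hcomp : IsCompact Fr) {t : ℝ} (ht : t ∈ Fr) : arcKappa Fr t = t := by
  have hne : (Fr ∩ Iic t).Nonempty := ⟨t, ht, le_refl t⟩
  unfold arcKappa
  rw [if_pos hne]
  exact le_antisymm (arcKappa_mem_inter hcomp hne).2
    (le_csSup (hcomp.inter_right isClosed_Iic).bddAbove ⟨ht, le_refl t⟩)

lemma arcKappa_le (hcomp : IsCompact Fr) {t : ℝ} (h : (Fr ∩ Iic t).Nonempty) :
    arcKappa Fr t ≤ t := by
  unfold arcKappa; rw [if_pos h]; exact (arcKappa_mem_inter hcomp h).2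

lemma arcKappa_ge (hcomp : IsCompact Fr) {t y : ℝ} (h : y ∈ Fr) (hyt : y ≤ t) :
    y ≤ arcKappa Fr t := by
  have hne : (Fr ∩ Iic t).Nonempty := ⟨y, h, hyt⟩
  unfold arcKappa; rw [if_pos hne]
  exact le_csSup (hcomp.inter_right isClosed_Iic).bddAbove ⟨h, hyt⟩

/-- If `Fr` misses `(s,t)` then `σr ∘ arcKappa` agrees at `s` and `t`. -/
lemma arcKappa_gap (hcomp : IsCompact Fr) (hne : Fr.Nonempty)
    (hgapR : ∀ a ∈ Fr, ∀ b ∈ Fr, a < b → Ioo a b ∩ Fr = ∅ → σr a = σr b)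
    {s t : ℝ} (hst : s ≤ t) (hmiss : Ioo s t ∩ Fr = ∅) :
    σr (arcKappa Fr s) = σr (arcKappa Fr t) := by
  by_cases hs : (Fr ∩ Iic s).Nonempty
  · have ht' : (Fr ∩ Iic t).Nonempty := hs.mono (inter_subset_inter_right _ (Iic_subset_Iic.2 hst))
    set a := arcKappa Fr s with ha
    set b := arcKappa Fr t with hb
    have haF : a ∈ Fr := arcKappa_mem hcomp hne s
    have hbF : b ∈ Fr := arcKappa_mem hcomp hne t
    have has : a ≤ s := arcKappa_le hcomp hs
    have hbt : b ≤ t := arcKappa_le hcomp ht'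
    have hab : a ≤ b := arcKappa_ge hcomp haF (le_trans has hst)
    rcases eq_or_lt_of_le hab with h | h
    · rw [h]
    · -- b > a; b cannot lie in (s,t), so b = t ∈ Fr, and (a,t) misses Fr
      have hbs : ¬ b ≤ s := fun hbs => absurd (arcKappa_ge hcomp hbF hbs) (not_le.2 h)
      have hbt' : b = t := by
        rcases eq_or_lt_of_le hbt with h' | h'
        · exact h'
        · exfalso
          have : b ∈ Ioo s t ∩ Fr := ⟨⟨not_le.1 hbs, h'⟩, hbF⟩
          rw [hmiss] at this
          exact this
      apply hgapR a haF b hbF h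
      ext y
      simp only [mem_inter_iff, mem_Ioo, mem_empty_iff_false, iff_false, not_and]
      rintro ⟨hy1, hy2⟩ hyF
      rcases le_or_gt y s with hys | hys
      · exact absurd (arcKappa_ge hcomp hyF hys) (not_le.2 hy1)
      · have : y ∈ Ioo s t ∩ Fr := ⟨⟨hys, hbt' ▸ hy2⟩, hyF⟩
        rw [hmiss] at this
        exact this
  · -- Fr ∩ Iic s = ∅ : κ s = sInf Fr
    have hks : arcKappa Fr s = sInf Fr := if_neg hs
    by_cases ht' : (Fr ∩ Iic t).Nonempty
    · -- then Fr ⊆ Ici t essentially: κ t = t = sInf Fr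
      have hbF : arcKappa Fr t ∈ Fr := arcKappa_mem hcomp hne t
      have hbt : arcKappa Fr t ≤ t := arcKappa_le hcomp ht'
      have hbeq : arcKappa Fr t = sInf Fr := by
        apply le_antisymm _ (csInf_le hcomp.bddBelow hbF)
        apply le_csInf hne
        intro y hyF
        by_contra hcon
        push_neg at hcon
        have hys : ¬ y ≤ s := fun h => hs ⟨y, hyF, h⟩
        have hyt : y < t := lt_of_lt_of_le hcon hbt
        have : y ∈ Ioo s t ∩ Fr := ⟨⟨not_le.1 hys, hyt⟩, hyF⟩
        rw [hmiss] at this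
        exact this
      rw [hks, hbeq]
    · have hkt : arcKappa Fr t = sInf Fr := if_neg ht'
      rw [hks, hkt]

/-- Continuity of `σr ∘ arcKappa Fr`. -/
lemma arcKappa_continuous (hσ : Continuous σr) (hcomp : IsCompact Fr) (hcl : IsClosed Fr)
    (hne : Fr.Nonempty)
    (hgapR : ∀ a ∈ Fr, ∀ b ∈ Fr, a < b → Ioo a b ∩ Fr = ∅ → σr a = σr b) :
    Continuous (fun t => σr (arcKappa Fr t)) := by
  rw [continuous_iff_continuousAt]
  intro t
  have hconst : ∀ V : Set ℝ, IsOpen V → t ∈ V →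
      (∀ s ∈ V, σr (arcKappa Fr s) = σr (arcKappa Fr t)) →
      ContinuousAt (fun u => σr (arcKappa Fr u)) t := by
    intro V hV htV hloc
    apply ContinuousAt.congr (continuousAt_const (y := σr (arcKappa Fr t)))
    filter_upwards [hV.mem_nhds htV] with s hs
    exact (hloc s hs).symm
  by_cases htF : t ∈ Fr
  · -- main case : t ∈ Fr
    have hκt : arcKappa Fr t = t := arcKappa_self hcomp htF
    have hκeq : σr (arcKappa Fr t) = σr t := by rw [hκt]
    suffices hgoal : Filter.Tendsto (fun u => σr (arcKappa Fr u)) (nhds t) (nhds (σr t)) by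
      simpa [ContinuousAt, hκeq] using hgoal
    rw [Filter.tendsto_def]
    intro V hV
    have hW : σr ⁻¹' V ∈ nhds t := hσ.continuousAt hV
    obtain ⟨δ, hδ, hball⟩ := Metric.mem_nhds_iff.1 hW
    rw [Real.ball_eq_Ioo] at hball
    -- right side is uniform; left side needs cases
    have hRight : ∀ s, t ≤ s → s < t + δ → σr (arcKappa Fr s) ∈ V := by
      intro s hts hsδ
      have h1 : t ≤ arcKappa Fr s := arcKappa_ge hcomp htF hts
      have h2 : arcKappa Fr s ≤ s := arcKappa_le hcomp ⟨t, htF, hts⟩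
      exact hball ⟨by linarith, by linarith⟩
    by_cases hL : (Fr ∩ Iio t).Nonempty
    · set a := sSup (Fr ∩ Iio t) with haDef
      have haclosure : a ∈ Fr ∩ Iic t := by
        have h1 : a ∈ closure (Fr ∩ Iio t) :=
          csSup_mem_closure hL (hcomp.bddAbove.mono inter_subset_left)
        have h2 : closure (Fr ∩ Iio t) ⊆ Fr ∩ Iic t := by
          apply closure_minimal _ (hcl.inter isClosed_Iic)
          exact inter_subset_inter_right _ Iio_subset_Iic_self
        exact h2 h1
      rcases eq_or_lt_of_le (show a ≤ t from haclosure.2) with hat | hat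
      · -- t is a left accumulation point
        obtain ⟨y, hy, hy2⟩ := exists_lt_of_lt_csSup hL
          (show t - δ < a by linarith [hat])
        have hyt : y < t := hy.2
        refine Filter.mem_of_superset (Ioo_mem_nhds (show y < t from hyt) (show t < t + δ by linarith)) ?_
        rintro s ⟨hs1, hs2⟩
        rcases le_or_gt t s with hts | hst
        · exact hRight s hts hs2
        · have h1 : y ≤ arcKappa Fr s := arcKappa_ge hcomp hy.1 (le_of_lt hs1)
          have h2 : arcKappa Fr s ≤ s := arcKappa_le hcomp ⟨y, hy.1, le_of_lt hs1⟩
          exact hball ⟨by linarith, by linarith⟩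
      · -- gap (a, t)
        have hgap : Ioo a t ∩ Fr = ∅ := by
          ext y
          simp only [mem_inter_iff, mem_Ioo, mem_empty_iff_false, iff_false, not_and]
          rintro ⟨hy1, hy2⟩ hyF
          have : y ≤ a := by
            rw [haDef]
            exact le_csSup (hcomp.bddAbove.mono inter_subset_left) ⟨hyF, hy2⟩
          exact absurd this (not_le.2 hy1)
        have hσat : σr a = σr t := hgapR a haclosure.1 t htF hat hgap
        refine Filter.mem_of_superset (Ioo_mem_nhds hat (by linarith : t < t + δ)) ?_
        rintro s ⟨hs1, hs2⟩
        rcases le_or_gt t s with hts | hst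
        · exact hRight s hts hs2
        · -- a < s < t : κ s = a
          have hκs : arcKappa Fr s = a := by
            have hne' : (Fr ∩ Iic s).Nonempty := ⟨a, haclosure.1, le_of_lt hs1⟩
            apply le_antisymm
            · unfold arcKappa
              rw [if_pos hne']
              apply csSup_le hne'
              rintro y ⟨hyF, hys⟩
              by_contra hcon
              have : y ∈ Ioo a t ∩ Fr := ⟨⟨not_le.1 hcon, lt_of_le_of_lt hys hst⟩, hyF⟩
              rw [hgap] at this
              exact this
            · exact arcKappa_ge hcomp haclosure.1 (le_of_lt hs1)
          show σr (arcKappa Fr s) ∈ V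
          rw [hκs, hσat]
          exact mem_of_mem_nhds hV
    · -- no points of Fr below t : sInf Fr = t and κ s = t for s < t
      have hinf : sInf Fr = t := by
        apply le_antisymm (csInf_le hcomp.bddBelow htF)
        apply le_csInf hne
        intro y hy
        by_contra hcon
        exact hL ⟨y, hy, not_le.1 hcon⟩
      refine Filter.mem_of_superset (Ioo_mem_nhds (by linarith : t - 1 < t)
        (by linarith : t < t + δ)) ?_
      rintro s ⟨hs1, hs2⟩
      rcases le_or_gt t s with hts | hst
      · exact hRight s hts hs2
      · have hempty : ¬ (Fr ∩ Iic s).Nonempty := by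
          rintro ⟨y, hyF, hys⟩
          exact hL ⟨y, hyF, lt_of_le_of_lt hys hst⟩
        have : arcKappa Fr s = t := by rw [arcKappa, if_neg hempty, hinf]
        show σr (arcKappa Fr s) ∈ V
        rw [this]
        exact hball ⟨by linarith, by linarith⟩
  · -- t ∉ Fr
    by_cases hIic : (Fr ∩ Iic t).Nonempty
    · by_cases hIci : (Fr ∩ Ici t).Nonempty
      · -- t in a gap (a, b)
        set a := arcKappa Fr t with haDef
        set b := sInf (Fr ∩ Ici t) with hbDef
        have haF : a ∈ Fr ∩ Iic t := by
          rw [haDef, arcKappa, if_pos hIic]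
          exact arcKappa_mem_inter hcomp hIic
        have hbF : b ∈ Fr ∩ Ici t := (hcomp.inter_right isClosed_Ici).sInf_mem hIci
        have hat : a < t := lt_of_le_of_ne haF.2 (fun h => htF (h ▸ haF.1))
        have htb : t < b := lt_of_le_of_ne hbF.2 (fun h => htF (h ▸ hbF.1))
        have hgapab : Ioo a b ∩ Fr = ∅ := by
          ext y
          simp only [mem_inter_iff, mem_Ioo, mem_empty_iff_false, iff_false, not_and]
          rintro ⟨hy1, hy2⟩ hyF
          rcases le_or_gt y t with hyt | hyt
          · exact absurd (arcKappa_ge hcomp hyF hyt) (not_le.2 hy1)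
          · exact absurd (csInf_le (hcomp.bddBelow.mono inter_subset_left)
              (⟨hyF, le_of_lt hyt⟩ : y ∈ Fr ∩ Ici t)) (not_le.2 hy2)
        apply hconst (Ioo a b) isOpen_Ioo ⟨hat, htb⟩
        intro s hs
        have hκs : arcKappa Fr s = a := by
          have hne' : (Fr ∩ Iic s).Nonempty := ⟨a, haF.1, le_of_lt hs.1⟩
          apply le_antisymm
          · unfold arcKappa
            rw [if_pos hne']
            apply csSup_le hne'
            rintro y ⟨hyF, hys⟩
            by_contra hcon
            have : y ∈ Ioo a b ∩ Fr := ⟨⟨not_le.1 hcon, lt_of_le_of_lt hys hs.2⟩, hyF⟩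
            rw [hgapab] at this
            exact this
          · exact arcKappa_ge hcomp haF.1 (le_of_lt hs.1)
        have hκt : arcKappa Fr t = a := haDef.symm
        simp only [hκs, hκt]
      · -- t > sSup Fr : κ constant = sSup Fr on Ioi (sSup Fr)
        have hMt : sSup Fr < t := by
          by_contra h
          exact hIci ⟨sSup Fr, hcomp.sSup_mem hne, not_lt.1 h⟩
        apply hconst (Ioi (sSup Fr)) isOpen_Ioi hMt
        intro s hs
        have hconst' : ∀ u : ℝ, sSup Fr < u → arcKappa Fr u = sSup Fr := by
          intro u hu
          have hne' : (Fr ∩ Iic u).Nonempty := ⟨sSup Fr, hcomp.sSup_mem hne, le_of_lt hu⟩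
          apply le_antisymm
          · unfold arcKappa
            rw [if_pos hne']
            apply csSup_le hne'
            rintro y ⟨hyF, -⟩
            exact le_csSup hcomp.bddAbove hyF
          · exact arcKappa_ge hcomp (hcomp.sSup_mem hne) (le_of_lt hu)
        simp only [hconst' s hs, hconst' t hMt]
    · -- t < sInf Fr : κ constant = sInf Fr on Iio (sInf Fr)
      have htm : t < sInf Fr := by
        by_contra h
        exact hIic ⟨sInf Fr, hcomp.sInf_mem hne, not_lt.1 h⟩
      apply hconst (Iio (sInf Fr)) isOpen_Iio htm
      intro s hs
      have hconst' : ∀ u : ℝ, u < sInf Fr → arcKappa Fr u = sInf Fr := by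
        intro u hu
        have hempty : ¬ (Fr ∩ Iic u).Nonempty := by
          rintro ⟨y, hyF, hyu⟩
          exact absurd (csInf_le hcomp.bddBelow hyF) (not_le.2 (lt_of_le_of_lt hyu hu))
        rw [arcKappa, if_neg hempty]
      simp only [hconst' s hs, hconst' t htm]

end Kappa

section CDF

open MeasureTheory

lemma arc_cdf_continuous (ν : Measure ℝ) [IsFiniteMeasure ν] (hatom : ∀ x : ℝ, ν {x} = 0) :
    Continuous (fun t : ℝ => (ν (Iic t)).toReal) := by
  have hfin : ∀ S : Set ℝ, ν S ≠ ⊤ := fun S => measure_ne_top ν S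
  have hmono : Monotone (fun t : ℝ => (ν (Iic t)).toReal) := fun s t hst =>
    ENNReal.toReal_mono (hfin _) (measure_mono (Iic_subset_Iic.2 hst))
  rw [continuous_iff_continuousAt]
  intro t
  rw [Metric.continuousAt_iff]
  intro ε hε
  have hR : Filter.Tendsto (fun n : ℕ => (ν (Iic (t + 1/(n+1)))).toReal) Filter.atTop
      (nhds ((ν (Iic t)).toReal)) := by
    have hInter : ⋂ n : ℕ, Iic (t + 1/(n+1)) = Iic t := by
      ext y
      simp only [mem_iInter, mem_Iic]
      constructor
      · intro hy
        by_contra hcon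
        push_neg at hcon
        obtain ⟨n, hn⟩ := exists_nat_one_div_lt (show 0 < y - t by linarith)
        have := hy n
        push_cast at hn this ⊢
        linarith
      · intro hy n
        have : (0:ℝ) < 1/(n+1) := by positivity
        linarith
    have h1 : Filter.Tendsto (fun n : ℕ => ν (Iic (t + 1/(n+1)))) Filter.atTop
        (nhds (ν (Iic t))) := by
      rw [← hInter]
      exact tendsto_measure_iInter_atTop
        (fun n => measurableSet_Iic.nullMeasurableSet)
        (fun n m hnm => Iic_subset_Iic.2 (by
          have h2 : (1:ℝ)/(m+1) ≤ 1/(n+1) := by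
            gcongr
          linarith))
        ⟨0, hfin _⟩
    exact (ENNReal.tendsto_toReal (hfin _)).comp h1
  have hL : Filter.Tendsto (fun n : ℕ => (ν (Iic (t - 1/(n+1)))).toReal) Filter.atTop
      (nhds ((ν (Iic t)).toReal)) := by
    have hUnion : ⋃ n : ℕ, Iic (t - 1/(n+1)) = Iio t := by
      ext y
      simp only [mem_iUnion, mem_Iic, mem_Iio]
      constructor
      · rintro ⟨n, hn⟩
        have : (0:ℝ) < 1/(n+1) := by positivity
        linarith
      · intro hy
        obtain ⟨n, hn⟩ := exists_nat_one_div_lt (show 0 < t - y by linarith)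
        refine ⟨n, ?_⟩
        push_cast at hn ⊢
        linarith
    have hIio : ν (Iio t) = ν (Iic t) := by
      apply le_antisymm (measure_mono Iio_subset_Iic_self)
      calc ν (Iic t) = ν (Iio t ∪ {t}) := by rw [Iio_union_right]
        _ ≤ ν (Iio t) + ν {t} := measure_union_le _ _
        _ = ν (Iio t) := by rw [hatom t, add_zero]
    have h1 : Filter.Tendsto (fun n : ℕ => ν (Iic (t - 1/(n+1)))) Filter.atTop
        (nhds (ν (Iic t))) := by
      rw [← hIio, ← hUnion]
      exact tendsto_measure_iUnion_atTop (fun n m hnm => Iic_subset_Iic.2 (by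
        have h2 : (1:ℝ)/(m+1) ≤ 1/(n+1) := by
          gcongr
        linarith))
    exact (ENNReal.tendsto_toReal (hfin _)).comp h1
  rw [Metric.tendsto_atTop] at hR hL
  obtain ⟨n1, hn1⟩ := hR ε hε
  obtain ⟨n2, hn2⟩ := hL ε hε
  have h1 := hn1 n1 (le_refl n1)
  have h2 := hn2 n2 (le_refl n2)
  rw [Real.dist_eq] at h1 h2
  have hp1 : (0:ℝ) < 1/(n1+1) := by positivity
  have hp2 : (0:ℝ) < 1/(n2+1) := by positivity
  refine ⟨min (1/(n1+1)) (1/(n2+1)), lt_min hp1 hp2, fun {s} hs => ?_⟩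
  rw [Real.dist_eq] at hs ⊢
  have hs1 : s < t + 1/(n1+1) := by
    have := abs_lt.1 hs
    have := min_le_left ((1:ℝ)/(n1+1)) (1/(n2+1))
    linarith [this, (abs_lt.1 hs).2]
  have hs2 : t - 1/(n2+1) < s := by
    linarith [(abs_lt.1 hs).1, min_le_right ((1:ℝ)/(n1+1)) (1/(n2+1))]
  have hub : (ν (Iic s)).toReal ≤ (ν (Iic (t + 1/(n1+1)))).toReal := hmono (le_of_lt hs1)
  have hlb : (ν (Iic (t - 1/(n2+1)))).toReal ≤ (ν (Iic s)).toReal := hmono (le_of_lt hs2)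
  have hub2 : (ν (Iic t)).toReal ≤ (ν (Iic (t + 1/(n1+1)))).toReal := hmono (by linarith)
  have hlb2 : (ν (Iic (t - 1/(n2+1)))).toReal ≤ (ν (Iic t)).toReal := hmono (by linarith)
  rw [abs_lt] at h1 h2 ⊢
  constructor <;> [linarith [h2.1, h2.2]; linarith [h1.1, h1.2]]

end CDF


/-- For a topological path `σ` with distinct endpoints in a Hausdorff space
there is a closed set `F ⊆ [0,1]` such that: both endpoints lie in `σ(F)`;
`σ` agrees on the two endpoints of any component of the complement of `F`;
`F` is minimal with these two properties; and `σ(F)` is an arc. -/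
theorem exists_minimal_closed_arc_set
    {X : Type} [TopologicalSpace X] [T2Space X]
    (σ : unitInterval → X) (hσ : Continuous σ) (hne : σ 0 ≠ σ 1) :
    ∃ F : Set unitInterval, IsClosed F ∧
      (σ 0 ∈ σ '' F ∧ σ 1 ∈ σ '' F) ∧
      (∀ a ∈ F, ∀ b ∈ F, a < b → (∀ c, a < c → c < b → c ∉ F) → σ a = σ b) ∧
      (∀ F' : Set unitInterval, F' ⊆ F → IsClosed F' →
        (σ 0 ∈ σ '' F' ∧ σ 1 ∈ σ '' F') →
        (∀ a ∈ F', ∀ b ∈ F', a < b → (∀ c, a < c → c < b → c ∉ F') → σ a = σ b) →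
        F' = F) ∧
      (∃ g : unitInterval → X, Topology.IsEmbedding g ∧ Set.range g = σ '' F) := by
  classical
  set σr : ℝ → X := fun x => σ (Set.projIcc 0 1 zero_le_one x) with hσrdef
  have hσrc : Continuous σr := hσ.comp continuous_projIcc
  have hval : ∀ t : unitInterval, σr ↑t = σ t := by
    intro t
    rw [hσrdef]
    simp only [Set.projIcc_val]
  have h0 : σr 0 = σ 0 := by
    have := hval 0
    norm_num at this
    exact this
  have h1 : σr 1 = σ 1 := by
    have := hval 1
    norm_num at this
    exact this
  have hner : σr 0 ≠ σr 1 := by rw [h0, h1]; exact hne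
  obtain ⟨Fr, hmem, hmin⟩ := arc_exists_minimal σr hσrc
  set F : Set unitInterval := Subtype.val ⁻¹' Fr with hFdef
  have him : σ '' F = σr '' Fr := by
    ext x
    constructor
    · rintro ⟨t, ht, rfl⟩
      exact ⟨↑t, ht, hval t⟩
    · rintro ⟨r, hr, rfl⟩
      exact ⟨⟨r, hmem.1 hr⟩, hr, (hval ⟨r, hmem.1 hr⟩).symm⟩
  have hFclosed : IsClosed F := hmem.2.1.preimage continuous_subtype_val
  have hi0 : σ 0 ∈ σ '' F := by rw [him, ← h0]; exact hmem.2.2.1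
  have hi1 : σ 1 ∈ σ '' F := by rw [him, ← h1]; exact hmem.2.2.2.1
  have hgapsub : ∀ a ∈ F, ∀ b ∈ F, a < b → (∀ c, a < c → c < b → c ∉ F) → σ a = σ b := by
    intro a ha b hb hab hnc
    have hgap : Ioo (↑a:ℝ) ↑b ∩ Fr = ∅ := by
      ext x
      simp only [mem_inter_iff, mem_Ioo, mem_empty_iff_false, iff_false, not_and]
      rintro ⟨hx1, hx2⟩ hxF
      have hx01 : x ∈ Icc (0:ℝ) 1 := hmem.1 hxF
      exact hnc ⟨x, hx01⟩ (Subtype.coe_lt_coe.1 hx1) (Subtype.coe_lt_coe.1 hx2) hxF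
    have := hmem.2.2.2.2 ↑a ha ↑b hb (Subtype.coe_lt_coe.2 hab) hgap
    rwa [hval, hval] at this
  have hminsub : ∀ F' : Set unitInterval, F' ⊆ F → IsClosed F' →
      (σ 0 ∈ σ '' F' ∧ σ 1 ∈ σ '' F') →
      (∀ a ∈ F', ∀ b ∈ F', a < b → (∀ c, a < c → c < b → c ∉ F') → σ a = σ b) →
      F' = F := by
    intro F' hF'sub hF'closed ⟨hF'0, hF'1⟩ hF'gap
    set Fr' : Set ℝ := Subtype.val '' F' with hFr'def
    have hval_im : ∀ {t : unitInterval}, t ∈ F' → (↑t : ℝ) ∈ Fr' :=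
      fun ht => ⟨_, ht, rfl⟩
    have hFr'mem : Fr' ∈ arcFam σr := by
      refine ⟨?_, ?_, ?_, ?_, ?_⟩
      · rintro x ⟨t, -, rfl⟩
        exact t.2
      · exact (hF'closed.isCompact.image continuous_subtype_val).isClosed
      · obtain ⟨t, ht, hteq⟩ := hF'0
        exact ⟨↑t, hval_im ht, by rw [hval t, hteq, h0]⟩
      · obtain ⟨t, ht, hteq⟩ := hF'1
        exact ⟨↑t, hval_im ht, by rw [hval t, hteq, h1]⟩
      · rintro x ⟨tx, htx, rfl⟩ y ⟨ty, hty, rfl⟩ hxy hgap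
        have : σ tx = σ ty := by
          apply hF'gap tx htx ty hty (Subtype.coe_lt_coe.1 hxy)
          intro c hc1 hc2 hcF'
          have : (↑c : ℝ) ∈ Ioo (↑tx:ℝ) ↑ty ∩ Fr' :=
            ⟨⟨Subtype.coe_lt_coe.2 hc1, Subtype.coe_lt_coe.2 hc2⟩, hval_im hcF'⟩
          rw [hgap] at this
          exact this
        rw [hval tx, hval ty]
        exact this
    have hFr'sub : Fr' ⊆ Fr := by
      rintro x ⟨t, ht, rfl⟩
      exact hF'sub ht
    have heq := hmin Fr' hFr'mem hFr'sub
    ext t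
    constructor
    · exact fun ht => hF'sub ht
    · intro ht
      have : (↑t : ℝ) ∈ Fr' := heq.symm ▸ ht
      obtain ⟨s, hs, hst⟩ := this
      rwa [← Subtype.ext hst]
  refine ⟨F, hFclosed, ⟨hi0, hi1⟩, hgapsub, hminsub, ?_⟩
  -- Part (iv) : the arc
  have hcomp : IsCompact Fr := arc_compact_of_mem hmem
  have hcl : IsClosed Fr := hmem.2.1
  have hFne : Fr.Nonempty := arc_fam_nonempty hmem
  have hgapR := hmem.2.2.2.2
  have hperf := arc_perfect hσrc hmem hmin hner
  obtain ⟨ν, hfin, hatom, hsupp, hpos⟩ := arc_exists_good_measure Fr hcl hperf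
  haveI := hfin
  set h' : ℝ → ℝ := fun t => (ν (Iic t)).toReal with hh'def
  have hcont : Continuous h' := arc_cdf_continuous ν hatom
  have hmono : Monotone h' := fun s t hst =>
    ENNReal.toReal_mono (measure_ne_top ν _) (measure_mono (Iic_subset_Iic.2 hst))
  have hmM := arc_sInf_lt_sSup hσrc hmem hmin hner
  have hmmem := arc_sInf_mem hmem
  have hMmem := arc_sSup_mem hmem
  have hM1 : sSup Fr ≤ 1 := (hmem.1 hMmem).2
  have h'0 : h' 0 = 0 := by
    have hν0 : ν (Iic 0) = 0 := by
      have hsub : Iic (0:ℝ) ⊆ Iio 0 ∪ {0} := by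
        intro x hx
        rcases lt_or_eq_of_le (mem_Iic.1 hx) with h | h
        · exact Or.inl h
        · exact Or.inr (by simp [h])
      have h1' : ν (Iio 0) = 0 := by
        apply hsupp
        ext x
        simp only [mem_inter_iff, mem_Iio, mem_empty_iff_false, iff_false, not_and]
        intro hx hxF
        exact absurd (hmem.1 hxF).1 (not_le.2 hx)
      apply le_antisymm _ (zero_le)
      calc ν (Iic 0) ≤ ν (Iio 0 ∪ {0}) := measure_mono hsub
        _ ≤ ν (Iio 0) + ν {0} := measure_union_le _ _
        _ = 0 := by rw [h1', hatom, add_zero]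
    rw [hh'def]
    simp [hν0]
  set T : ℝ := h' 1 with hTdef
  have hT : 0 < T := by
    have hsub : Ioo (sInf Fr - 1) (sSup Fr) ⊆ Iic 1 :=
      fun x hx => le_trans (le_of_lt hx.2) hM1
    have hν : 0 < ν (Ioo (sInf Fr - 1) (sSup Fr)) := by
      apply hpos _ _ (by linarith)
      exact ⟨sInf Fr, hmmem, by linarith, hmM⟩
    have : 0 < ν (Iic 1) := lt_of_lt_of_le hν (measure_mono hsub)
    rw [hTdef, hh'def]
    exact ENNReal.toReal_pos (ne_of_gt this) (measure_ne_top ν _)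
  have h'le : ∀ t : unitInterval, h' ↑t ≤ T := fun t => hmono t.2.2
  have h'nonneg : ∀ t : ℝ, 0 ≤ h' t := fun t => ENNReal.toReal_nonneg
  set e : unitInterval → unitInterval := fun t =>
    ⟨h' ↑t / T, div_nonneg (h'nonneg _) hT.le, (div_le_one hT).2 (h'le t)⟩ with hedef
  have hecont : Continuous e :=
    Continuous.subtype_mk ((hcont.comp continuous_subtype_val).div_const T) _
  have hesurj : Function.Surjective e := by
    intro y
    have hivt := intermediate_value_Icc (zero_le_one (α := ℝ)) hcont.continuousOn
    have hyT : (↑y : ℝ) * T ∈ Icc (h' 0) (h' 1) := by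
      rw [h'0, ← hTdef]
      exact ⟨mul_nonneg y.2.1 hT.le, by nlinarith [y.2.2, hT]⟩
    obtain ⟨x, hx, hhx⟩ := hivt hyT
    refine ⟨⟨x, hx⟩, Subtype.ext ?_⟩
    show h' x / T = ↑y
    rw [hhx]
    field_simp
  -- the quotient relations
  have heq_of_h' : ∀ s t : ℝ, s ≤ t → h' s = h' t → ν (Ioc s t) = 0 := by
    intro s t hst heq
    have hν : ν (Iic s) = ν (Iic t) := by
      rw [hh'def] at heq
      exact (ENNReal.toReal_eq_toReal_iff' (measure_ne_top ν _) (measure_ne_top ν _)).1 heq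
    have hun : ν (Iic t) = ν (Iic s) + ν (Ioc s t) := by
      rw [← Iic_union_Ioc_eq_Iic hst]
      exact measure_union (Iic_disjoint_Ioc le_rfl) measurableSet_Ioc
    have : ν (Iic s) + ν (Ioc s t) = ν (Iic s) + 0 := by
      rw [add_zero, ← hun, hν]
    exact WithTop.add_left_cancel (measure_ne_top ν _) this
  have hh'_of_ν : ∀ s t : ℝ, s ≤ t → ν (Ioc s t) = 0 → h' s = h' t := by
    intro s t hst hν
    have hIic : ν (Iic s) = ν (Iic t) := by
      rw [← Iic_union_Ioc_eq_Iic hst,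
        measure_union (Iic_disjoint_Ioc le_rfl) measurableSet_Ioc, hν, add_zero]
    show (ν (Iic s)).toReal = (ν (Iic t)).toReal
    rw [hIic]
  have L1 : ∀ s t : ℝ, s ≤ t → h' s = h' t →
      σr (arcKappa Fr s) = σr (arcKappa Fr t) := by
    intro s t hst heq
    have hno : Ioo s t ∩ Fr = ∅ := by
      by_contra hcon
      rcases eq_or_lt_of_le hst with rfl | hlt
      · rw [Ioo_self, empty_inter] at hcon
        exact hcon rfl
      · have hne' : (Fr ∩ Ioo s t).Nonempty := by
          rcases nonempty_iff_ne_empty.2 hcon with ⟨x, hx⟩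
          exact ⟨x, hx.2, hx.1⟩
        have := hpos s t hlt hne'
        have hle : ν (Ioo s t) ≤ ν (Ioc s t) := measure_mono Ioo_subset_Ioc_self
        rw [heq_of_h' s t hst heq] at hle
        exact absurd (le_antisymm hle (zero_le)) (ne_of_gt this)
    exact arcKappa_gap hcomp hFne hgapR hst hno
  have L2 : ∀ s t : ℝ, s ≤ t → σr (arcKappa Fr s) = σr (arcKappa Fr t) → h' s = h' t := by
    intro s t hst heq
    set a := arcKappa Fr s with hadef
    set b := arcKappa Fr t with hbdef
    have hbF : b ∈ Fr := arcKappa_mem hcomp hFne t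
    have haF : a ∈ Fr := arcKappa_mem hcomp hFne s
    -- Fr ∩ Ioc s t ⊆ {sInf Fr, b}
    have hsmall : Fr ∩ Ioc s t ⊆ {sInf Fr, b} := by
      rintro y ⟨hyF, hy1, hy2⟩
      have hyb : y ≤ b := arcKappa_ge hcomp hyF hy2
      by_cases hcase : (Fr ∩ Iic s).Nonempty
      · have has : a ≤ s := arcKappa_le hcomp hcase
        have hab : a ≤ b := arcKappa_ge hcomp haF (le_trans has hst)
        rcases eq_or_lt_of_le hab with hab' | hab'
        · exact absurd (le_trans (hyb.trans_eq hab'.symm) has) (not_le.2 hy1)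
        · have hgapf := arc_gap_forcing hσrc hmem hmin hner haF hbF hab' heq
          rcases eq_or_lt_of_le hyb with hyb' | hyb'
          · exact Or.inr (by simp [hyb'])
          · exfalso
            have : y ∈ Ioo a b ∩ Fr := ⟨⟨lt_of_le_of_lt has hy1, hyb'⟩, hyF⟩
            rw [hgapf] at this
            exact this
      · have ha' : a = sInf Fr := if_neg hcase
        have hmy : sInf Fr ≤ y := csInf_le hcomp.bddBelow hyF
        have hmb : sInf Fr ≤ b := csInf_le hcomp.bddBelow hbF
        rcases eq_or_lt_of_le hmb with hmb' | hmb'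
        · exact Or.inl (le_antisymm (le_trans hyb hmb'.symm.le) hmy)
        · have heq' : σr (sInf Fr) = σr b := by rw [← ha']; exact heq
          have hgapf := arc_gap_forcing hσrc hmem hmin hner hmmem hbF hmb' heq'
          rcases eq_or_lt_of_le hmy with hmy' | hmy'
          · exact Or.inl hmy'.symm
          · rcases eq_or_lt_of_le hyb with hyb' | hyb'
            · exact Or.inr (by simp [hyb'])
            · exfalso
              have : y ∈ Ioo (sInf Fr) b ∩ Fr := ⟨⟨hmy', hyb'⟩, hyF⟩
              rw [hgapf] at this
              exact this
    apply hh'_of_ν s t hst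
    have hsub : Ioc s t ⊆ (Ioc s t \ Fr) ∪ {sInf Fr, b} := by
      intro y hy
      by_cases hyF : y ∈ Fr
      · exact Or.inr (hsmall ⟨hyF, hy⟩)
      · exact Or.inl ⟨hy, hyF⟩
    have h1' : ν (Ioc s t \ Fr) = 0 := by
      apply hsupp
      ext x
      simp only [mem_inter_iff, mem_diff, mem_empty_iff_false, iff_false, not_and]
      rintro ⟨-, hx2⟩
      exact hx2
    have h2' : ν ({sInf Fr, b} : Set ℝ) = 0 := by
      have : ({sInf Fr, b} : Set ℝ) = {sInf Fr} ∪ {b} := rfl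
      rw [this]
      apply le_antisymm _ (zero_le)
      calc ν ({sInf Fr} ∪ {b}) ≤ ν {sInf Fr} + ν {b} := measure_union_le _ _
        _ = 0 := by rw [hatom, hatom, add_zero]
    apply le_antisymm _ (zero_le)
    calc ν (Ioc s t) ≤ ν ((Ioc s t \ Fr) ∪ {sInf Fr, b}) := measure_mono hsub
      _ ≤ ν (Ioc s t \ Fr) + ν {sInf Fr, b} := measure_union_le _ _
      _ = 0 := by rw [h1', h2', add_zero]
  -- build g
  set gu : unitInterval → X := fun t => σr (arcKappa Fr ↑t) with hgudef
  have hgucont : Continuous gu :=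
    (arcKappa_continuous hσrc hcomp hcl hFne hgapR).comp continuous_subtype_val
  have he_iff : ∀ s t : unitInterval, e s = e t ↔ h' ↑s = h' ↑t := by
    intro s t
    constructor
    · intro h
      have := congrArg Subtype.val h
      show h' ↑s = h' ↑t
      have := (div_left_inj' hT.ne').1 this
      exact this
    · intro h
      exact Subtype.ext (by show h' ↑s / T = h' ↑t / T; rw [h])
  have hfib : ∀ s t : unitInterval, e s = e t → gu s = gu t := by
    intro s t h
    rcases le_total (↑s : ℝ) ↑t with hst | hst
    · exact L1 _ _ hst ((he_iff s t).1 h)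
    · exact (L1 _ _ hst ((he_iff t s).1 h.symm)).symm
  have hfib' : ∀ s t : unitInterval, gu s = gu t → e s = e t := by
    intro s t h
    rcases le_total (↑s : ℝ) ↑t with hst | hst
    · exact (he_iff s t).2 (L2 _ _ hst h)
    · exact ((he_iff t s).2 (L2 _ _ hst h.symm)).symm
  set g : unitInterval → X := gu ∘ Function.surjInv hesurj with hgdef
  have hge : ∀ t, g (e t) = gu t := by
    intro t
    apply hfib
    exact Function.surjInv_eq hesurj (e t)
  have hq : Topology.IsQuotientMap e :=
    (hecont.isClosedMap).isQuotientMap hecont hesurj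
  have hgcont : Continuous g := by
    rw [hq.continuous_iff]
    have : g ∘ e = gu := funext hge
    rw [this]
    exact hgucont
  have hginj : Function.Injective g := by
    intro y1 y2 h
    have h1 : e (Function.surjInv hesurj y1) = y1 := Function.surjInv_eq hesurj y1
    have h2 : e (Function.surjInv hesurj y2) = y2 := Function.surjInv_eq hesurj y2
    rw [← h1, ← h2]
    exact hfib' _ _ h
  have hrange : Set.range g = σ '' F := by
    rw [him]
    ext x
    constructor
    · rintro ⟨y, rfl⟩
      exact ⟨arcKappa Fr ↑(Function.surjInv hesurj y),
        arcKappa_mem hcomp hFne _, rfl⟩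
    · rintro ⟨r, hr, rfl⟩
      have hr01 : r ∈ Icc (0:ℝ) 1 := hmem.1 hr
      refine ⟨e ⟨r, hr01⟩, ?_⟩
      rw [hge ⟨r, hr01⟩]
      show σr (arcKappa Fr r) = σr r
      rw [arcKappa_self hcomp hr]
  exact ⟨g, (hgcont.isClosedEmbedding hginj).isEmbedding, hrange⟩
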